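/- Let r ≥ 1 and let A ⊆ Q_d be a set that percolates under r-neighbour bootstrap percolation; for each vertex v let t_v = min{t : v ∈ A_t} be its infection time. Call a vertex v bad if it has at least d/2 neighbours u with |t_v − t_u| ≥ 2. Then the number of bad vertices is at most 2^{d+2}(r−1)/d. -/
import Mathlib


/-- A vertex of the `d`-dimensional hypercube `{0,1}^d`. -/
abbrev Cube (d : ℕ) := Fin d → Bool

/-- One step of `r`-neighbour bootstrap percolation on `Q_d`: a vertex becomes infected
if it has at least `r` infected neighbours (neighbours = Hamming distance 1). -/
noncomputable def bootStep (d r : ℕ) (A : Set (Cube d)) : Set (Cube d) :=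
  A ∪ {v | r ≤ {u : Cube d | hammingDist u v = 1 ∧ u ∈ A}.ncard}

/-- The set of infected sites at time `t`, starting from `A`. -/
noncomputable def boot (d r : ℕ) (A : Set (Cube d)) : ℕ → Set (Cube d)
  | 0 => A
  | t + 1 => bootStep d r (boot d r A t)

/-- `A` percolates: eventually every vertex is infected. -/
def Percolates (d r : ℕ) (A : Set (Cube d)) : Prop :=
  ∃ t, boot d r A t = Set.univ

/-- The percolation time of `A`: the least `t` with all sites infected. -/
noncomputable def percTime (d r : ℕ) (A : Set (Cube d)) : ℕ :=
  sInf {t | boot d r A t = Set.univ}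

/-- `M_r(d)`: the maximal percolation time over percolating subsets of `Q_d`. -/
noncomputable def maxPercTime (d r : ℕ) : ℕ :=
  sSup {T | ∃ A : Set (Cube d), Percolates d r A ∧ percTime d r A = T}

/-- The infection time `t_v` of a vertex `v`. -/
noncomputable def infTime (d r : ℕ) (A : Set (Cube d)) (v : Cube d) : ℕ :=
  sInf {t | v ∈ boot d r A t}

/-- A `k`-snake of length `T` in `Q_d`: a path `S_0, …, S_T` (consecutive vertices at
Hamming distance 1, all vertices distinct) such that `d(S_t, S_{t'}) ≥ k` whenever
`t' − t ≥ k`. -/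
def IsSnake (d k T : ℕ) (S : ℕ → Cube d) : Prop :=
  (∀ t, t < T → hammingDist (S t) (S (t + 1)) = 1) ∧
  (∀ t t', t ≤ T → t' ≤ T → S t = S t' → t = t') ∧
  (∀ t t', t' ≤ T → t + k ≤ t' → k ≤ hammingDist (S t) (S t'))

/-- `s(d)`: the maximal length of a `3`-snake in `Q_d`. -/
noncomputable def snakeMax (d : ℕ) : ℕ :=
  sSup {T | ∃ S : ℕ → Cube d, IsSnake d 3 T S}

/-- `‖x‖`: the number of `1`-coordinates of `x`. -/
def wt {d : ℕ} (x : Cube d) : ℕ := hammingDist x (fun _ => false)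

/-- The vertex of `Q_d` whose `1`-coordinates are exactly the positions in `s`
(0-indexed). -/
def ofOnes (d : ℕ) (s : Finset ℕ) : Cube d := fun i => decide (i.val ∈ s)

/-- `(b, a)`: the vertex of `Q_d` with first coordinate `b` and remaining coordinates `a`. -/
def extendCube (d : ℕ) (b : Bool) (a : Cube (d - 1)) : Cube d :=
  fun i => if h : i.val = 0 then b else a ⟨i.val - 1, by have := i.isLt; omega⟩

/-- `(y, x)`: the vertex of `Q_d` whose first `9` coordinates have `1`s exactly at the
(0-indexed) positions in `ys ⊆ {0,…,8}` and whose last `d − 9` coordinates are `x`. -/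
def embed9 (d : ℕ) (ys : Finset ℕ) (x : Cube (d - 9)) : Cube d :=
  fun i => if h : i.val < 9 then decide (i.val ∈ ys) else x ⟨i.val - 9, by have := i.isLt; omega⟩

/-- `J_1 = [1,1][*]^{d-2}`: vertices whose first two coordinates are `1`. -/
def J1 (d : ℕ) : Set (Cube d) := {x | ∀ i : Fin d, i.val < 2 → x i = true}

/-- `J_2`: the two vertices whose only `1`-coordinates are coordinate 3 together with
exactly one of coordinates 1 and 2 (1-indexed). -/
def J2 (d : ℕ) : Set (Cube d) := {ofOnes d {0, 2}, ofOnes d {1, 2}}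

/-- `J_3`: vertices with `(x_1,x_2,x_3) ∈ {(0,1,0),(1,0,0)}` whose last `d' = d-3`
coordinates form the word `0^{2l} 1 1 0^{d'-2-2l}` for some `0 ≤ l ≤ (d'-2)/2`. -/
def J3 (d : ℕ) : Set (Cube d) :=
  {x | ∃ l : ℕ, 2 * l + 2 ≤ d - 3 ∧
    (x = ofOnes d {0, 3 + 2 * l, 4 + 2 * l} ∨ x = ofOnes d {1, 3 + 2 * l, 4 + 2 * l})}

/-- The five snake conditions of Lemma 3 (for a `3`-snake of length `T` in `Q_{d''}`). -/
def SnakeConds (d'' T : ℕ) (S : ℕ → Cube d'') : Prop :=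
  S T = ofOnes d'' ∅ ∧ S (T - 1) = ofOnes d'' {0} ∧ S (T - 2) = ofOnes d'' {0, 2} ∧
  S (T - 3) = ofOnes d'' {0, 2, 4} ∧ ∀ t, t < T - 3 → 3 < wt (S t)

/-- `S^i = {S_{T-i-3j} : j ≥ 0, T-i-3j ≥ 0}`. -/
def SnakeTail (d'' T : ℕ) (S : ℕ → Cube d'') (i : ℕ) : Set (Cube d'') :=
  {x | ∃ j : ℕ, 3 * j + i ≤ T ∧ x = S (T - i - 3 * j)}

/-- `I_0`: vertices whose last `d'' = d - 9` coordinates belong to `S^i` for some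
`i ∈ {1,2,3}` and whose first `9` coordinates are all `0` except exactly one of the two
coordinates in (1-indexed) positions `2i+2` and `2i+3`, which equals `1`. -/
def I0 (d T : ℕ) (S : ℕ → Cube (d - 9)) : Set (Cube d) :=
  {v | ∃ i ∈ ({1, 2, 3} : Set ℕ), ∃ x ∈ SnakeTail (d - 9) T S i,
    v = embed9 d {2 * i + 1} x ∨ v = embed9 d {2 * i + 2} x}

section Aux

open Finset

lemma boot_mono' (d r : ℕ) (A : Set (Cube d)) : Monotone (boot d r A) := by
  apply monotone_nat_of_le_succ
  intro t
  show boot d r A t ⊆ bootStep d r (boot d r A t)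
  exact Set.subset_union_left

lemma mem_boot_infTime' (d r : ℕ) (A : Set (Cube d)) (hA : Percolates d r A) (v : Cube d) :
    v ∈ boot d r A (infTime d r A v) := by
  obtain ⟨t, ht⟩ := hA
  have h : t ∈ {t | v ∈ boot d r A t} := by
    show v ∈ boot d r A t
    rw [ht]; trivial
  exact Nat.sInf_mem ⟨t, h⟩

lemma key_lemma' (d r : ℕ) (hr : 1 ≤ r) (A : Set (Cube d)) (hA : Percolates d r A) (v : Cube d) :
    {u : Cube d | hammingDist u v = 1 ∧ infTime d r A u + 2 ≤ infTime d r A v}.ncard ≤ r - 1 := by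
  by_cases hv : infTime d r A v ≤ 1
  · have : {u : Cube d | hammingDist u v = 1 ∧ infTime d r A u + 2 ≤ infTime d r A v} = ∅ := by
      ext u; simp only [Set.mem_setOf_eq, Set.mem_empty_iff_false, iff_false]
      rintro ⟨-, h⟩; omega
    simp [this]
  · push_neg at hv
    have hv1 : v ∉ boot d r A (infTime d r A v - 1) := by
      intro h
      have h2 : sInf {t | v ∈ boot d r A t} ≤ infTime d r A v - 1 := Nat.sInf_le h
      unfold infTime at h2 hv
      omega
    have hstep : boot d r A (infTime d r A v - 1)
        = bootStep d r (boot d r A (infTime d r A v - 2)) := by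
      have h3 : infTime d r A v - 1 = (infTime d r A v - 2) + 1 := by omega
      rw [h3]; rfl
    rw [hstep, bootStep] at hv1
    have hlt : ¬ r ≤ {u : Cube d | hammingDist u v = 1
        ∧ u ∈ boot d r A (infTime d r A v - 2)}.ncard := by
      intro h; exact hv1 (Set.mem_union_right _ h)
    have hsub : {u : Cube d | hammingDist u v = 1 ∧ infTime d r A u + 2 ≤ infTime d r A v}
        ⊆ {u : Cube d | hammingDist u v = 1 ∧ u ∈ boot d r A (infTime d r A v - 2)} := by
      rintro u ⟨h1, h2⟩
      refine ⟨h1, ?_⟩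
      exact boot_mono' d r A (by omega : infTime d r A u ≤ infTime d r A v - 2)
        (mem_boot_infTime' d r A hA u)
    have := Set.ncard_le_ncard hsub (Set.toFinite _)
    omega

lemma ncard_setOf_eq_card_filter' {α : Type*} [Fintype α] (p : α → Prop) [DecidablePred p] :
    {x | p x}.ncard = (Finset.univ.filter p).card := by
  rw [Set.ncard_eq_toFinset_card', Set.toFinset_setOf]

end Aux

/-- If `A` percolates under `r`-neighbour bootstrap percolation, and a
vertex `v` is called bad when it has at least `d/2` neighbours `u` with `|t_v − t_u| ≥ 2`,
then the number of bad vertices is at most `2^{d+2}(r−1)/d`. -/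
theorem stmt10 (d r : ℕ) (hd : 1 ≤ d) (hr : 1 ≤ r) (A : Set (Cube d))
    (hA : Percolates d r A) :
    ({v : Cube d | (d : ℝ) / 2 ≤
        ({u : Cube d | hammingDist u v = 1 ∧
          (infTime d r A u + 2 ≤ infTime d r A v ∨
            infTime d r A v + 2 ≤ infTime d r A u)}.ncard : ℝ)}.ncard : ℝ)
      ≤ 2 ^ (d + 2) * ((r : ℝ) - 1) / d := by
  classical
  set t : Cube d → ℕ := infTime d r A with ht
  -- key bound
  have hkey : ∀ v : Cube d,
      (Finset.univ.filter fun u : Cube d => hammingDist u v = 1 ∧ t u + 2 ≤ t v).card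
        ≤ r - 1 := by
    intro v
    have h := key_lemma' d r hr A hA v
    rwa [ncard_setOf_eq_card_filter'] at h
  -- split the gap-neighbour count into two directed counts
  have hsplit : ∀ v : Cube d,
      (Finset.univ.filter fun u : Cube d =>
        hammingDist u v = 1 ∧ (t u + 2 ≤ t v ∨ t v + 2 ≤ t u)).card
      = (Finset.univ.filter fun u : Cube d => hammingDist u v = 1 ∧ t u + 2 ≤ t v).card
        + (Finset.univ.filter fun u : Cube d => hammingDist u v = 1 ∧ t v + 2 ≤ t u).card := by
    intro v
    simp only [Finset.card_filter, ← Finset.sum_add_distrib]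
    apply Finset.sum_congr rfl
    intro u _
    by_cases h1 : hammingDist u v = 1 <;> by_cases h2 : t u + 2 ≤ t v <;>
      by_cases h3 : t v + 2 ≤ t u <;> simp [h1, h2, h3] <;> omega
  -- the two directed counts have the same total, by symmetry
  have hswap :
      (∑ v : Cube d,
        (Finset.univ.filter fun u : Cube d => hammingDist u v = 1 ∧ t v + 2 ≤ t u).card)
      = ∑ v : Cube d,
        (Finset.univ.filter fun u : Cube d => hammingDist u v = 1 ∧ t u + 2 ≤ t v).card := by
    simp only [Finset.card_filter]
    rw [Finset.sum_comm]
    apply Finset.sum_congr rfl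
    intro v _
    apply Finset.sum_congr rfl
    intro u _
    rw [hammingDist_comm]
  have hcard : (Finset.univ : Finset (Cube d)).card = 2 ^ d := by
    simp [Fintype.card_fun]
  -- total bound in ℕ
  have htot : (∑ v : Cube d,
      (Finset.univ.filter fun u : Cube d =>
        hammingDist u v = 1 ∧ (t u + 2 ≤ t v ∨ t v + 2 ≤ t u)).card)
      ≤ 2 ^ (d + 1) * (r - 1) := by
    calc (∑ v : Cube d, (Finset.univ.filter fun u : Cube d =>
            hammingDist u v = 1 ∧ (t u + 2 ≤ t v ∨ t v + 2 ≤ t u)).card)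
        = (∑ v : Cube d, (Finset.univ.filter fun u : Cube d =>
            hammingDist u v = 1 ∧ t u + 2 ≤ t v).card)
          + ∑ v : Cube d, (Finset.univ.filter fun u : Cube d =>
            hammingDist u v = 1 ∧ t v + 2 ≤ t u).card := by
          rw [← Finset.sum_add_distrib]
          exact Finset.sum_congr rfl fun v _ => hsplit v
      _ = 2 * ∑ v : Cube d, (Finset.univ.filter fun u : Cube d =>
            hammingDist u v = 1 ∧ t u + 2 ≤ t v).card := by rw [hswap]; ring
      _ ≤ 2 * ((Finset.univ : Finset (Cube d)).card * (r - 1)) := by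
          have := Finset.sum_le_card_nsmul Finset.univ _ (r - 1) fun v _ => hkey v
          simpa [smul_eq_mul] using Nat.mul_le_mul_left 2 this
      _ = 2 ^ (d + 1) * (r - 1) := by rw [hcard]; ring
  -- rewrite the goal in terms of Finset cards
  rw [ncard_setOf_eq_card_filter']
  have hGset : ∀ v : Cube d,
      ({u : Cube d | hammingDist u v = 1 ∧ (t u + 2 ≤ t v ∨ t v + 2 ≤ t u)}.ncard)
      = (Finset.univ.filter fun u : Cube d =>
          hammingDist u v = 1 ∧ (t u + 2 ≤ t v ∨ t v + 2 ≤ t u)).card :=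
    fun v => ncard_setOf_eq_card_filter' _
  set B : Finset (Cube d) := Finset.univ.filter fun v : Cube d => (d : ℝ) / 2 ≤
      (({u : Cube d | hammingDist u v = 1 ∧
        (t u + 2 ≤ t v ∨ t v + 2 ≤ t u)}.ncard : ℕ) : ℝ) with hBdef
  have h1 : (B.card : ℝ) * ((d : ℝ) / 2) ≤ ∑ v ∈ B,
      ((Finset.univ.filter fun u : Cube d =>
        hammingDist u v = 1 ∧ (t u + 2 ≤ t v ∨ t v + 2 ≤ t u)).card : ℝ) := by
    have := Finset.card_nsmul_le_sum B
      (fun v => ((Finset.univ.filter fun u : Cube d =>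
        hammingDist u v = 1 ∧ (t u + 2 ≤ t v ∨ t v + 2 ≤ t u)).card : ℝ)) ((d : ℝ) / 2)
      (fun v hv => by
        have h := (Finset.mem_filter.1 hv).2
        rwa [hGset v] at h)
    simpa [nsmul_eq_mul, mul_comm] using this
  have h2 : (∑ v ∈ B, ((Finset.univ.filter fun u : Cube d =>
        hammingDist u v = 1 ∧ (t u + 2 ≤ t v ∨ t v + 2 ≤ t u)).card : ℝ))
      ≤ ∑ v : Cube d, ((Finset.univ.filter fun u : Cube d =>
        hammingDist u v = 1 ∧ (t u + 2 ≤ t v ∨ t v + 2 ≤ t u)).card : ℝ) :=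
    Finset.sum_le_sum_of_subset_of_nonneg (Finset.subset_univ B)
      (fun _ _ _ => by positivity)
  have h3 : (∑ v : Cube d, ((Finset.univ.filter fun u : Cube d =>
        hammingDist u v = 1 ∧ (t u + 2 ≤ t v ∨ t v + 2 ≤ t u)).card : ℝ))
      ≤ 2 ^ (d + 1) * ((r : ℝ) - 1) := by
    calc (∑ v : Cube d, ((Finset.univ.filter fun u : Cube d =>
          hammingDist u v = 1 ∧ (t u + 2 ≤ t v ∨ t v + 2 ≤ t u)).card : ℝ))
        = ((∑ v : Cube d, (Finset.univ.filter fun u : Cube d =>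
            hammingDist u v = 1 ∧ (t u + 2 ≤ t v ∨ t v + 2 ≤ t u)).card : ℕ) : ℝ) := by
          push_cast; ring
      _ ≤ ((2 ^ (d + 1) * (r - 1) : ℕ) : ℝ) := by exact_mod_cast htot
      _ = 2 ^ (d + 1) * ((r : ℝ) - 1) := by
          push_cast [Nat.cast_sub hr]; ring
  have hd0 : (0 : ℝ) < (d : ℝ) := by exact_mod_cast hd
  rw [le_div_iff₀ hd0]
  have e1 : (B.card : ℝ) * (d : ℝ) = 2 * ((B.card : ℝ) * ((d : ℝ) / 2)) := by ring
  have e2 : (2 : ℝ) ^ (d + 2) * ((r : ℝ) - 1)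
      = 2 * (2 ^ (d + 1) * ((r : ℝ) - 1)) := by ring
  linarith
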